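/- arXiv:1008.3943 — 4 statements merged into one kernel-verified Lean document; each statement's English description precedes it below -/
import Mathlib

section
/- If w is a locally integrable nonnegative function on ℝ and M denotes the dyadic maximal operator, then for every t > 0 and every integrable f, t · w({x : Mf(x) > t}) ≤ ∫ |f(x)| · Mw(x) dx, where w(E) = ∫_E w. -/
open MeasureTheory Set ENNReal

/-- The dyadic interval `[2^k m, 2^k (m+1))`. -/
noncomputable def dyadicI (k m : ℤ) : Set ℝ := Set.Ico ((2:ℝ)^k * m) ((2:ℝ)^k * (m+1))

/-- The dyadic maximal function of an `ℝ≥0∞`-valued function. -/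
noncomputable def dyadicMaximal (w : ℝ → ℝ≥0∞) (x : ℝ) : ℝ≥0∞ :=
  ⨆ (k : ℤ) (m : ℤ) (_ : x ∈ dyadicI k m),
    (∫⁻ y in dyadicI k m, w y) / volume (dyadicI k m)

lemma two_zpow_pos (k : ℤ) : (0:ℝ) < 2^k := zpow_pos (by norm_num) k

lemma dyadicI_floor {k m : ℤ} {x : ℝ} (h : x ∈ dyadicI k m) : m = ⌊x / 2^k⌋ := by
  obtain ⟨h1, h2⟩ := h
  have hp := two_zpow_pos k
  symm
  rw [Int.floor_eq_iff]
  constructor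
  · rw [le_div_iff₀ hp]; linarith
  · rw [div_lt_iff₀ hp]; push_cast; linarith

lemma mem_dyadicI_floor (k : ℤ) (x : ℝ) : x ∈ dyadicI k ⌊x / 2^k⌋ := by
  have hp := two_zpow_pos k
  constructor
  · have h1 : (⌊x/2^k⌋ : ℝ) * 2^k ≤ x := (le_div_iff₀ hp).mp (Int.floor_le _)
    linarith
  · have h2 : x / 2^k < (⌊x/2^k⌋ : ℝ) + 1 := Int.lt_floor_add_one _
    rw [div_lt_iff₀ hp] at h2
    linarith

lemma volume_dyadicI (k m : ℤ) : volume (dyadicI k m) = ENNReal.ofReal (2^k) := by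
  rw [dyadicI, Real.volume_Ico]
  congr 1; ring

lemma dyadicI_subset {k k' m m' : ℤ} {x : ℝ} (hk : k ≤ k') (h : x ∈ dyadicI k m)
    (h' : x ∈ dyadicI k' m') : dyadicI k m ⊆ dyadicI k' m' := by
  have hp := two_zpow_pos k
  have hd : (2:ℝ)^k' = 2^k * ((2^(k'-k).toNat : ℤ) : ℝ) := by
    push_cast
    rw [← zpow_natCast (2:ℝ), Int.toNat_of_nonneg (by omega), ← zpow_add₀ (by norm_num : (2:ℝ) ≠ 0)]
    ring_nf
  obtain ⟨M, N, hcast, hcast2⟩ : ∃ M N : ℤ, (2:ℝ)^k' * m' = 2^k * M ∧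
      (2:ℝ)^k' * (m'+1) = 2^k * N := by
    refine ⟨2^(k'-k).toNat * m', 2^(k'-k).toNat * (m'+1), ?_, ?_⟩ <;>
      (rw [hd]; push_cast; ring)
  obtain ⟨h1, h2⟩ := h
  obtain ⟨h1', h2'⟩ := h'
  have hL : (2:ℝ)^k' * m' ≤ 2^k * m := by
    by_contra hcon
    push_neg at hcon
    rw [hcast] at hcon h1'
    have hmM : (m:ℝ) < M := (mul_lt_mul_iff_right₀ hp).mp hcon
    have hMm : (m:ℤ) + 1 ≤ M := Int.add_one_le_of_lt (by exact_mod_cast hmM)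
    have : (2:ℝ)^k * ((m:ℝ)+1) ≤ 2^k * M := by
      apply mul_le_mul_of_nonneg_left _ hp.le
      exact_mod_cast hMm
    push_cast at h2
    linarith
  have hR : (2:ℝ)^k * (m+1) ≤ 2^k' * (m'+1) := by
    by_contra hcon
    push_neg at hcon
    rw [hcast2] at hcon h2'
    have hNm' : (N:ℝ) < (m:ℝ) + 1 := by
      have := (mul_lt_mul_iff_right₀ hp).mp hcon; push_cast at this ⊢; linarith
    have hNm : N ≤ m := Int.lt_add_one_iff.mp (by exact_mod_cast hNm')
    have : (2:ℝ)^k * (N:ℝ) ≤ 2^k * m := by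
      apply mul_le_mul_of_nonneg_left _ hp.le
      exact_mod_cast hNm
    linarith
  intro y hy
  obtain ⟨hy1, hy2⟩ := hy
  exact ⟨le_trans hL hy1, lt_of_lt_of_le hy2 hR⟩

lemma avg_le_dyadicMaximal {u : ℝ → ℝ≥0∞} {k m : ℤ} {x : ℝ} (h : x ∈ dyadicI k m) :
    (∫⁻ y in dyadicI k m, u y) / volume (dyadicI k m) ≤ dyadicMaximal u x := by
  apply le_iSup₂_of_le k m
  exact le_iSup_of_le h le_rfl

/-- Fefferman–Stein weak type inequality for the dyadic maximal function:
`t · w({Mf > t}) ≤ ∫ |f| · Mw`. -/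
theorem stmt0 (w f : ℝ → ℝ) (hw : ∀ x, 0 ≤ w x) (hwl : LocallyIntegrable w volume)
    (hf : Integrable f volume) (t : ℝ) (ht : 0 < t) :
    ENNReal.ofReal t *
        ∫⁻ x in {x | ENNReal.ofReal t < dyadicMaximal (fun y => (‖f y‖₊ : ℝ≥0∞)) x},
          ENNReal.ofReal (w x) ≤
      ∫⁻ x, (‖f x‖₊ : ℝ≥0∞) * dyadicMaximal (fun y => ENNReal.ofReal (w y)) x := by
  set F : ℝ → ℝ≥0∞ := fun y => (‖f y‖₊ : ℝ≥0∞) with hF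
  set W : ℝ → ℝ≥0∞ := fun y => ENNReal.ofReal (w y) with hW
  set T : ℝ≥0∞ := ENNReal.ofReal t with hT
  set avg : ℤ × ℤ → ℝ≥0∞ :=
    fun p => (∫⁻ y in dyadicI p.1 p.2, F y) / volume (dyadicI p.1 p.2) with havg
  set Sel : ℤ × ℤ → Prop := fun p => T < avg p ∧
    ∀ q : ℤ × ℤ, p.1 < q.1 → dyadicI p.1 p.2 ⊆ dyadicI q.1 q.2 → avg q ≤ T with hSel
  -- basic facts
  have hvol0 : ∀ p : ℤ × ℤ, volume (dyadicI p.1 p.2) ≠ 0 := by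
    intro p; rw [volume_dyadicI]
    simp [ENNReal.ofReal_eq_zero, not_le, two_zpow_pos]
  have hvolt : ∀ p : ℤ × ℤ, volume (dyadicI p.1 p.2) ≠ ⊤ := by
    intro p; rw [volume_dyadicI]; exact ofReal_ne_top
  have hC : (∫⁻ y, F y) ≠ ⊤ := hf.hasFiniteIntegral.ne
  -- every point of E lies in a selected interval
  have hcover : ∀ x, T < dyadicMaximal F x → ∃ p, Sel p ∧ x ∈ dyadicI p.1 p.2 := by
    intro x hx
    rw [dyadicMaximal, lt_iSup_iff] at hx
    obtain ⟨k₀, hk₀⟩ := hx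
    rw [lt_iSup_iff] at hk₀
    obtain ⟨m₀, hm₀⟩ := hk₀
    rw [lt_iSup_iff] at hm₀
    obtain ⟨hxm, hav⟩ := hm₀
    -- the set of good levels
    have hk₀A : T < avg (k₀, ⌊x / 2^k₀⌋) := by
      simp only [havg]
      rwa [← dyadicI_floor hxm]
    have hbdd : ∃ b : ℤ, ∀ z : ℤ, T < avg (z, ⌊x / 2^z⌋) → z ≤ b := by
      obtain ⟨n, hn⟩ := pow_unbounded_of_one_lt ((∫⁻ y, F y).toReal / t) (by norm_num : (1:ℝ) < 2)
      refine ⟨n, fun k hk => ?_⟩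
      simp only [havg] at hk
      have hlt : T * volume (dyadicI k ⌊x / 2^k⌋) < ∫⁻ y in dyadicI k ⌊x / 2^k⌋, F y :=
        (ENNReal.lt_div_iff_mul_lt (Or.inl (hvol0 (k, ⌊x / 2^k⌋)))
          (Or.inl (hvolt (k, ⌊x / 2^k⌋)))).mp hk
      have hle : T * volume (dyadicI k ⌊x / 2^k⌋) < ∫⁻ y, F y :=
        lt_of_lt_of_le hlt (setLIntegral_le_lintegral _ _)
      rw [volume_dyadicI, hT, ← ENNReal.ofReal_mul ht.le] at hle
      have h2k : t * 2^k < (∫⁻ y, F y).toReal := by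
        have := ENNReal.toReal_lt_toReal ofReal_ne_top hC |>.mpr hle
        rwa [ENNReal.toReal_ofReal (by positivity)] at this
      have : (2:ℝ)^k < 2^(n:ℤ) := by
        rw [zpow_natCast]
        calc (2:ℝ)^k < (∫⁻ y, F y).toReal / t := by
              rw [lt_div_iff₀ ht]; linarith
          _ < 2^n := hn
      have := (zpow_lt_zpow_iff_right₀ (by norm_num : (1:ℝ) < 2)).mp this
      exact this.le
    obtain ⟨k, hkA, hkmax⟩ := Int.exists_greatest_of_bdd hbdd ⟨k₀, hk₀A⟩
    refine ⟨(k, ⌊x / 2^k⌋), ⟨hkA, ?_⟩, mem_dyadicI_floor k x⟩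
    intro q hq hsub
    by_contra hcon
    push_neg at hcon
    have hxq : x ∈ dyadicI q.1 q.2 := hsub (mem_dyadicI_floor k x)
    have hq2 : q.2 = ⌊x / 2^q.1⌋ := dyadicI_floor hxq
    have : T < avg (q.1, ⌊x / 2^q.1⌋) := by rwa [← hq2, Prod.mk.eta]
    exact absurd (hkmax q.1 this) (not_le.mpr hq)
  -- selected intervals are pairwise disjoint
  have hdisj : ∀ p q : ℤ × ℤ, Sel p → Sel q → p ≠ q →
      Disjoint (dyadicI p.1 p.2) (dyadicI q.1 q.2) := by
    have key : ∀ p q : ℤ × ℤ, Sel p → Sel q → p.1 ≤ q.1 → p ≠ q →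
        Disjoint (dyadicI p.1 p.2) (dyadicI q.1 q.2) := by
      intro p q hp hq hle hne
      rw [Set.disjoint_left]
      intro x hxp hxq
      rcases eq_or_lt_of_le hle with heq | hlt
      · have h1 : p.2 = ⌊x / 2^p.1⌋ := dyadicI_floor hxp
        have h2 : q.2 = ⌊x / 2^q.1⌋ := dyadicI_floor hxq
        exact hne (Prod.ext heq (by rw [h1, h2, heq]))
      · have hsub : dyadicI p.1 p.2 ⊆ dyadicI q.1 q.2 := dyadicI_subset hle hxp hxq
        exact absurd (hp.2 q hlt hsub) (not_le.mpr hq.1)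
    intro p q hp hq hne
    rcases le_total p.1 q.1 with h | h
    · exact key p q hp hq h hne
    · exact (key q p hq hp h (Ne.symm hne)).symm
  -- the union
  set U : Set ℝ := ⋃ p : {p : ℤ × ℤ // Sel p}, dyadicI p.1.1 p.1.2 with hU
  have hEU : {x | T < dyadicMaximal F x} ⊆ U := by
    intro x hx
    obtain ⟨p, hp, hxp⟩ := hcover x hx
    exact Set.mem_iUnion.mpr ⟨⟨p, hp⟩, hxp⟩
  have hmeas : ∀ p : {p : ℤ × ℤ // Sel p}, MeasurableSet (dyadicI p.1.1 p.1.2) :=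
    fun p => measurableSet_Ico
  have hpd : Pairwise (Function.onFun Disjoint fun p : {p : ℤ × ℤ // Sel p} =>
      dyadicI p.1.1 p.1.2) := by
    intro p q hne
    exact hdisj p.1 q.1 p.2 q.2 (Subtype.coe_injective.ne hne)
  -- w(I_p) finite
  have hwfin : ∀ p : ℤ × ℤ, (∫⁻ y in dyadicI p.1 p.2, W y) ≠ ⊤ := by
    intro p
    have hint : IntegrableOn w (dyadicI p.1 p.2) volume := by
      refine (hwl.integrableOn_isCompact isCompact_Icc).mono_set
        (?_ : dyadicI p.1 p.2 ⊆ Icc ((2:ℝ)^p.1 * p.2) ((2:ℝ)^p.1 * (p.2+1)))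
      exact Set.Ico_subset_Icc_self
    have hle : (∫⁻ y in dyadicI p.1 p.2, W y) ≤ ∫⁻ y in dyadicI p.1 p.2, (‖w y‖₊ : ℝ≥0∞) := by
      apply lintegral_mono
      intro y
      rw [hW]; simp only
      rw [← Real.enorm_eq_ofReal (hw y)]; exact le_rfl
    exact (lt_of_le_of_lt hle hint.hasFiniteIntegral).ne
  -- the per-interval estimate
  have hterm : ∀ p : ℤ × ℤ, Sel p →
      T * (∫⁻ y in dyadicI p.1 p.2, W y) ≤
        ∫⁻ y in dyadicI p.1 p.2, F y * dyadicMaximal W y := by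
    intro p hp
    set v := volume (dyadicI p.1 p.2) with hv
    set c : ℝ≥0∞ := (∫⁻ y in dyadicI p.1 p.2, W y) / v with hc
    have hcne : c ≠ ⊤ := (ENNReal.div_lt_top (hwfin p) (hvol0 p)).ne
    calc T * (∫⁻ y in dyadicI p.1 p.2, W y)
        ≤ avg p * (∫⁻ y in dyadicI p.1 p.2, W y) := mul_le_mul_left hp.1.le _
      _ = c * ∫⁻ y in dyadicI p.1 p.2, F y := by
          simp only [havg, hc, hv, div_eq_mul_inv]; ring
      _ = ∫⁻ y in dyadicI p.1 p.2, c * F y := (lintegral_const_mul' _ _ hcne).symm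
      _ ≤ ∫⁻ y in dyadicI p.1 p.2, dyadicMaximal W y * F y := by
          apply setLIntegral_mono' measurableSet_Ico
          intro y hy
          exact mul_le_mul_left (avg_le_dyadicMaximal hy) _
      _ = ∫⁻ y in dyadicI p.1 p.2, F y * dyadicMaximal W y := by
          simp_rw [mul_comm]
  -- put it together
  calc T * ∫⁻ x in {x | T < dyadicMaximal F x}, W x
      ≤ T * ∫⁻ x in U, W x := by gcongr
    _ = T * ∑' p : {p : ℤ × ℤ // Sel p}, ∫⁻ x in dyadicI p.1.1 p.1.2, W x := by
        rw [hU, lintegral_iUnion hmeas hpd]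
    _ = ∑' p : {p : ℤ × ℤ // Sel p}, T * ∫⁻ x in dyadicI p.1.1 p.1.2, W x :=
        ENNReal.tsum_mul_left.symm
    _ ≤ ∑' p : {p : ℤ × ℤ // Sel p}, ∫⁻ x in dyadicI p.1.1 p.1.2,
          F x * dyadicMaximal W x :=
        ENNReal.tsum_le_tsum fun p => hterm p.1 p.2
    _ = ∫⁻ x in U, F x * dyadicMaximal W x := by
        rw [hU, lintegral_iUnion hmeas hpd]
    _ ≤ ∫⁻ x, F x * dyadicMaximal W x := setLIntegral_le_lintegral _ _
end

section
/- Let J = [a, a+α) be a dyadic interval, λ > 0, and μ = λ·1_{[a+α/3, a+α)} dx. If I is a dyadic subinterval of J such that jp(J) = a+α/3 lies in the left half I⁻ of I, then ⟨μ, h_I⟩ / √|I| = λ/3, where h_I = (1_{I⁺} − 1_{I⁻})/|I|^{1/2} and ⟨μ, h_I⟩ = ∫ h_I dμ. -/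
open MeasureTheory Set

/-- The "jumping point" of the dyadic interval `J = [2^n p, 2^n (p+1))`. -/
noncomputable def jp (n p : ℤ) : ℝ := (2:ℝ)^n * p + (2:ℝ)^n / 3

/-- The right endpoint of the dyadic interval `J = [2^n p, 2^n (p+1))`. -/
noncomputable def rep (n p : ℤ) : ℝ := (2:ℝ)^n * (p + 1)

/-- The `L²`-normalized Haar function of the dyadic interval `dyadicI k m`:
`h_I = (1_{I⁺} - 1_{I⁻}) / |I|^{1/2}`, where `I⁻ = dyadicI (k-1) (2m)` and
`I⁺ = dyadicI (k-1) (2m+1)`. -/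
noncomputable def haarF (k m : ℤ) (x : ℝ) : ℝ :=
  ((dyadicI (k-1) (2*m+1)).indicator (fun _ => (1:ℝ)) x
    - (dyadicI (k-1) (2*m)).indicator (fun _ => (1:ℝ)) x) / Real.sqrt ((2:ℝ)^k)

set_option maxHeartbeats 1000000 in
/-- For the measure `μ = λ·1_{[jp(J), rep(J))} dx` and any dyadic `I ⊆ J` whose left
half contains `jp(J)`, one has `⟨μ, h_I⟩ / √|I| = λ/3`, where
`⟨μ, h_I⟩ = ∫ h_I dμ = ∫_{[jp(J),rep(J))} λ · h_I`. -/
theorem stmt2 (n p k m : ℤ) (lam : ℝ) (hlam : 0 < lam)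
    (hsub : dyadicI k m ⊆ dyadicI n p)
    (hj : jp n p ∈ dyadicI (k - 1) (2 * m)) :
    (∫ x in Set.Ico (jp n p) (rep n p), lam * haarF k m x) / Real.sqrt ((2:ℝ)^k)
      = lam / 3 := by
  have h2k : (0:ℝ) < (2:ℝ)^k := zpow_pos two_pos k
  have h2n : (0:ℝ) < (2:ℝ)^n := zpow_pos two_pos n
  have h2k1 : (2:ℝ)^(k-1) * 2 = (2:ℝ)^k := by
    rw [← zpow_add_one₀ (two_ne_zero), sub_add_cancel]
  have hne : (2:ℝ)^k * m < (2:ℝ)^k * (m+1) := by nlinarith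
  obtain ⟨hl, hr⟩ := (Set.Ico_subset_Ico_iff hne).mp hsub
  obtain ⟨hj1, hj2⟩ := hj
  rw [jp] at hj1 hj2
  push_cast at hj1 hj2 hl hr
  have hkn : k ≤ n := by
    rw [← zpow_le_zpow_iff_right₀ (one_lt_two : (1:ℝ) < 2)]
    nlinarith
  obtain ⟨s, hns⟩ : ∃ s : ℕ, n = k + (s:ℤ) := ⟨(n-k).toNat, by omega⟩
  have he : (2:ℝ)^n = (2:ℝ)^k * (2:ℝ)^s := by
    rw [hns, zpow_add₀ (two_ne_zero), zpow_natCast]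
  rw [he] at hj1 hj2
  have h2s : (0:ℝ) < (2:ℝ)^s := by positivity
  have hrw1 : (2:ℝ)^(k-1) * (2*(m:ℝ)) = (2:ℝ)^k * m := by rw [← h2k1]; ring
  have hrw2 : (2:ℝ)^(k-1) * (2*(m:ℝ)+1) = (2:ℝ)^k * m + (2:ℝ)^k/2 := by
    rw [← h2k1]; ring
  rw [hrw1] at hj1
  rw [hrw2] at hj2
  have hkey : 3 * ((2:ℤ)^s * p - m) + 2^s = 1 := by
    have h0 : (0:ℝ) ≤ 3 * ((2:ℝ)^s * p - m) + 2^s := by nlinarith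
    have h1 : 3 * ((2:ℝ)^s * (p:ℝ) - m) + 2^s < 2 := by nlinarith
    have h0' : (0:ℤ) ≤ 3 * ((2:ℤ)^s * p - m) + 2^s := by exact_mod_cast h0
    have h1' : 3 * ((2:ℤ)^s * p - m) + 2^s < 2 := by exact_mod_cast h1
    have hne0 : 3 * ((2:ℤ)^s * p - m) + 2^s ≠ 0 := by
      intro h
      have hdvd : (3:ℤ) ∣ 2^s := ⟨-((2:ℤ)^s * p - m), by linarith⟩
      have := Int.Prime.dvd_pow' (by norm_num) hdvd
      norm_num at this
    omega
  have hkeyR : 3 * ((2:ℝ)^s * p - m) + (2:ℝ)^s = 1 := by exact_mod_cast hkey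
  have hjp : jp n p = (2:ℝ)^k * m + (2:ℝ)^k / 3 := by
    rw [jp, he]; nlinarith
  -- abbreviations
  set c := Real.sqrt ((2:ℝ)^k) with hc
  have hcpos : 0 < c := Real.sqrt_pos.mpr h2k
  have hcsq : c * c = (2:ℝ)^k := Real.mul_self_sqrt h2k.le
  have hPm : MeasurableSet (dyadicI (k-1) (2*m+1)) := measurableSet_Ico
  have hNm : MeasurableSet (dyadicI (k-1) (2*m)) := measurableSet_Ico
  -- rewrite endpoints of P and N
  have hPdef : dyadicI (k-1) (2*m+1)
      = Set.Ico ((2:ℝ)^k*m + (2:ℝ)^k/2) ((2:ℝ)^k*m + (2:ℝ)^k) := by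
    rw [dyadicI]
    congr 1 <;> push_cast <;> rw [← h2k1] <;> ring
  have hNdef : dyadicI (k-1) (2*m)
      = Set.Ico ((2:ℝ)^k*m) ((2:ℝ)^k*m + (2:ℝ)^k/2) := by
    rw [dyadicI]
    congr 1 <;> push_cast <;> rw [← h2k1] <;> ring
  have hrep : rep n p = (2:ℝ)^n * (p+1) := by rw [rep]
  have hrepge : (2:ℝ)^k*m + (2:ℝ)^k ≤ rep n p := by rw [hrep]; nlinarith
  -- intersections
  have hAP : Set.Ico (jp n p) (rep n p) ∩ dyadicI (k-1) (2*m+1)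
      = Set.Ico ((2:ℝ)^k*m + (2:ℝ)^k/2) ((2:ℝ)^k*m + (2:ℝ)^k) := by
    rw [hPdef, Set.inter_eq_self_of_subset_right]
    apply Set.Ico_subset_Ico
    · rw [hjp]; nlinarith
    · exact hrepge
  have hAN : Set.Ico (jp n p) (rep n p) ∩ dyadicI (k-1) (2*m)
      = Set.Ico (jp n p) ((2:ℝ)^k*m + (2:ℝ)^k/2) := by
    rw [hNdef, Set.Ico_inter_Ico]
    have hmax : max (jp n p) ((2:ℝ)^k*m) = jp n p := max_eq_left (by rw [hjp]; nlinarith)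
    have hmin : min (rep n p) ((2:ℝ)^k*m + (2:ℝ)^k/2) = (2:ℝ)^k*m + (2:ℝ)^k/2 :=
      min_eq_right (by nlinarith)
    rw [hmax, hmin]
  -- integrability
  have hfinP : volume (dyadicI (k-1) (2*m+1)) < ⊤ := by
    rw [hPdef, Real.volume_Ico]; exact ENNReal.ofReal_lt_top
  have hfinN : volume (dyadicI (k-1) (2*m)) < ⊤ := by
    rw [hNdef, Real.volume_Ico]; exact ENNReal.ofReal_lt_top
  have hiP : IntegrableOn ((dyadicI (k-1) (2*m+1)).indicator (fun _ => (1:ℝ)))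
      (Set.Ico (jp n p) (rep n p)) volume := by
    refine Integrable.integrableOn ?_
    rw [integrable_indicator_iff hPm]
    exact (integrableOn_const hfinP.ne)
  have hiN : IntegrableOn ((dyadicI (k-1) (2*m)).indicator (fun _ => (1:ℝ)))
      (Set.Ico (jp n p) (rep n p)) volume := by
    refine Integrable.integrableOn ?_
    rw [integrable_indicator_iff hNm]
    exact (integrableOn_const hfinN.ne)
  -- rewrite the integrand
  have hint : ∀ x, lam * haarF k m x
      = (lam/c) * ((dyadicI (k-1) (2*m+1)).indicator (fun _ => (1:ℝ)) x
        - (dyadicI (k-1) (2*m)).indicator (fun _ => (1:ℝ)) x) := by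
    intro x; rw [haarF, ← hc]; ring
  simp only [hint]
  rw [MeasureTheory.integral_const_mul, MeasureTheory.integral_sub hiP hiN,
    MeasureTheory.setIntegral_indicator hPm, MeasureTheory.setIntegral_indicator hNm,
    hAP, hAN, MeasureTheory.setIntegral_const, MeasureTheory.setIntegral_const,
    Real.volume_real_Ico_of_le (by nlinarith), Real.volume_real_Ico_of_le (by rw [hjp]; nlinarith),
    smul_eq_mul, smul_eq_mul, mul_one, mul_one,
    hjp]
  field_simp
  nlinarith [hcsq, hcpos, hlam]
end

section
/- Let k ≥ 1, J a dyadic interval, μ = μ_J^λ, Ξ_J = {I_0 ⊇ ... ⊇ I_{2k}} the chain of dyadic subintervals with jp(J) ∈ I_i⁻ and |I_i| = 4|I_{i+1}|, and S = r·∑_{i=0}^{2k} ⟨μ, h_{I_i}⟩ h_{I_i} with r ∈ {+1,−1}. Then for every x in the left half of I(J) = I_{2k}, |S(x)| = (2k+1)λ/3. -/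
open MeasureTheory Set

/-- `⟨μ_J^λ, h_I⟩ = ∫ h_I dμ_J^λ`. -/
noncomputable def haarCoeff (n p : ℤ) (lam : ℝ) (km : ℤ × ℤ) : ℝ :=
  ∫ x in Set.Ico (jp n p) (rep n p), lam * haarF km.1 km.2 x

lemma aux_vol (K m : ℤ) : volume (dyadicI K m) = ENNReal.ofReal ((2:ℝ)^K) := by
  have h : (2:ℝ)^K * (m+1) - (2:ℝ)^K * m = (2:ℝ)^K := by ring
  rw [dyadicI, Real.volume_Ico, h]


lemma aux_pow4 (i : ℕ) : ∃ u : ℤ, (4:ℤ)^i = 3*u + 1 := by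
  induction i with
  | zero => exact ⟨0, rfl⟩
  | succ j ih => obtain ⟨u, hu⟩ := ih; exact ⟨4*u+1, by rw [pow_succ, hu]; ring⟩

lemma aux_jpa (n p K m : ℤ) (i : ℕ) (hK : K = n - 2*i)
    (h1 : (2:ℝ)^(K-1) * (2*m) ≤ jp n p)
    (h2 : jp n p < (2:ℝ)^(K-1) * (2*m+1)) :
    jp n p - (2:ℝ)^K * m = (2:ℝ)^K / 3 := by
  have h2pos : (0:ℝ) < (2:ℝ)^K := zpow_pos (by norm_num) K
  have hpow : (2:ℝ)^(K-1) * 2 = (2:ℝ)^K := by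
    rw [zpow_sub_one₀ (two_ne_zero)]; field_simp
  obtain ⟨u, hu⟩ := aux_pow4 i
  have hn : (2:ℝ)^n = (2:ℝ)^K * (3*(u:ℝ)+1) := by
    have : (2:ℝ)^n = (2:ℝ)^K * (2:ℝ)^(2*i : ℤ) := by
      rw [← zpow_add₀ (two_ne_zero) K (2*i)]; congr 1; omega
    rw [this]
    congr 1
    rw [show (2*(i:ℤ)) = ((2*i : ℕ) : ℤ) by push_cast; ring, zpow_natCast, pow_mul]
    norm_num
    exact_mod_cast congrArg (Int.cast : ℤ → ℝ) hu
  set t : ℤ := 4^i * p - m + u with ht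
  have key : jp n p - (2:ℝ)^K * m = (2:ℝ)^K * t + (2:ℝ)^K / 3 := by
    rw [jp, hn, ht]
    push_cast [hu]
    ring
  -- inequalities
  have h1' : (0:ℝ) ≤ (2:ℝ)^K * t + (2:ℝ)^K / 3 := by
    rw [← key]
    have : (2:ℝ)^(K-1) * (2*m) = (2:ℝ)^K * m := by rw [← hpow]; ring
    linarith [h1, this ▸ h1]
  have h2' : (2:ℝ)^K * t + (2:ℝ)^K / 3 < (2:ℝ)^K / 2 := by
    rw [← key]
    have e : (2:ℝ)^(K-1) * (2*m+1) = (2:ℝ)^K * m + (2:ℝ)^K / 2 := by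
      rw [← hpow]; ring
    rw [e] at h2; linarith
  have ht0 : t = 0 := by
    have l1 : (-1:ℝ) < t := by nlinarith
    have l2 : (t:ℝ) < 1 := by nlinarith
    have : (-1:ℤ) < t ∧ t < 1 := ⟨by exact_mod_cast l1, by exact_mod_cast l2⟩
    omega
  rw [key, ht0]; push_cast; ring

lemma aux_int_ind (S : Set ℝ) (a b : ℤ) (r : ℝ) :
    ∫ x in S, r * (dyadicI a b).indicator (fun _ => (1:ℝ)) x
      = r * (volume (S ∩ dyadicI a b)).toReal := by
  rw [integral_const_mul, dyadicI, setIntegral_indicator measurableSet_Ico, setIntegral_const,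
    smul_eq_mul, mul_one]
  rfl

lemma aux_integrable (S : Set ℝ) (a b : ℤ) (r : ℝ) (hS : volume S ≠ ⊤) :
    IntegrableOn (fun x => r * (dyadicI a b).indicator (fun _ => (1:ℝ)) x) S := by
  apply Integrable.const_mul
  apply Integrable.indicator _ measurableSet_Ico
  exact integrableOn_const hS

lemma aux_coeff (n p K m : ℤ) (lam : ℝ) (hK : K ≤ n)
    (hja : jp n p - (2:ℝ)^K * m = (2:ℝ)^K / 3) :
    haarCoeff n p lam (K, m) = lam * Real.sqrt ((2:ℝ)^K) / 3 := by
  have h2pos : (0:ℝ) < (2:ℝ)^K := zpow_pos (by norm_num) K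
  have hpow : (2:ℝ)^(K-1) * 2 = (2:ℝ)^K := by
    rw [zpow_sub_one₀ (two_ne_zero)]; field_simp
  have hspos : 0 < Real.sqrt ((2:ℝ)^K) := Real.sqrt_pos.2 h2pos
  have hs2 : Real.sqrt ((2:ℝ)^K) * Real.sqrt ((2:ℝ)^K) = (2:ℝ)^K :=
    Real.mul_self_sqrt h2pos.le
  have hjpa : jp n p = (2:ℝ)^K * m + (2:ℝ)^K/3 := by linarith
  have hlen : (2:ℝ)^K ≤ (2:ℝ)^n := zpow_le_zpow_right₀ (by norm_num) hK
  have hrep : (2:ℝ)^K * m + (2:ℝ)^K ≤ rep n p := by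
    have : rep n p = jp n p + 2/3 * (2:ℝ)^n := by rw [rep, jp]; ring
    rw [this, hjpa]; linarith
  have hST : volume (Set.Ico (jp n p) (rep n p)) ≠ ⊤ := by
    rw [Real.volume_Ico]; exact ENNReal.ofReal_ne_top
  have key : (fun x => lam * haarF K m x)
      = fun x => (lam/Real.sqrt ((2:ℝ)^K)) * (dyadicI (K-1) (2*m+1)).indicator (fun _ => (1:ℝ)) x
        - (lam/Real.sqrt ((2:ℝ)^K)) * (dyadicI (K-1) (2*m)).indicator (fun _ => (1:ℝ)) x := by
    funext x; rw [haarF]; field_simp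
  rw [haarCoeff]
  simp only [key]
  rw [integral_sub (aux_integrable _ _ _ _ hST) (aux_integrable _ _ _ _ hST),
    aux_int_ind, aux_int_ind]
  have c1 : (2:ℝ)^(K-1) * ((2*m+1 : ℤ):ℝ) = (2:ℝ)^K * m + (2:ℝ)^K/2 := by
    push_cast; linear_combination (2*(m:ℝ)+1)/2 * hpow
  have c2 : (2:ℝ)^(K-1) * (((2*m+1 : ℤ):ℝ)+1) = (2:ℝ)^K * m + (2:ℝ)^K := by
    push_cast; linear_combination ((m:ℝ)+1) * hpow
  have c3 : (2:ℝ)^(K-1) * ((2*m : ℤ):ℝ) = (2:ℝ)^K * m := by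
    push_cast; linear_combination (m:ℝ) * hpow
  have c4 : (2:ℝ)^(K-1) * (((2*m : ℤ):ℝ)+1) = (2:ℝ)^K * m + (2:ℝ)^K/2 := by
    push_cast; linear_combination (2*(m:ℝ)+1)/2 * hpow
  have hplus : Set.Ico (jp n p) (rep n p) ∩ dyadicI (K-1) (2*m+1)
      = Set.Ico ((2:ℝ)^K * m + (2:ℝ)^K/2) ((2:ℝ)^K * m + (2:ℝ)^K) := by
    rw [dyadicI, Set.Ico_inter_Ico, c1, c2, max_eq_right (by rw [hjpa]; linarith),
      min_eq_right hrep]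
  have hminus : Set.Ico (jp n p) (rep n p) ∩ dyadicI (K-1) (2*m)
      = Set.Ico (jp n p) ((2:ℝ)^K * m + (2:ℝ)^K/2) := by
    rw [dyadicI, Set.Ico_inter_Ico, c3, c4, max_eq_left (by rw [hjpa]; linarith),
      min_eq_right (by linarith)]
  rw [hplus, hminus, Real.volume_Ico, Real.volume_Ico, hjpa,
    ENNReal.toReal_ofReal (by linarith), ENNReal.toReal_ofReal (by linarith)]
  rw [← mul_sub]
  rw [show ((2:ℝ)^K * m + (2:ℝ)^K - ((2:ℝ)^K * m + (2:ℝ)^K/2))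
      - ((2:ℝ)^K * m + (2:ℝ)^K/2 - ((2:ℝ)^K * m + (2:ℝ)^K/3))
      = Real.sqrt ((2:ℝ)^K) * Real.sqrt ((2:ℝ)^K) / 3 by rw [hs2]; ring]
  field_simp

lemma aux_haarF_left (K m : ℤ) (x : ℝ) (hx : x ∈ dyadicI (K-1) (2*m)) :
    haarF K m x = -1 / Real.sqrt ((2:ℝ)^K) := by
  rw [haarF, Set.indicator_of_mem hx, Set.indicator_of_notMem]
  · norm_num
  · rw [dyadicI] at hx ⊢
    intro hmem
    have h1 := hx.2
    have h2 := hmem.1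
    push_cast at h1 h2
    linarith

-- membership characterization
lemma aux_mem_iff (K m : ℤ) (x : ℝ) :
    x ∈ dyadicI (K-1) (2*m) ↔
      (2:ℝ)^K * m ≤ x ∧ x < (2:ℝ)^K * m + (2:ℝ)^K / 2 := by
  have hpow : (2:ℝ)^(K-1) * 2 = (2:ℝ)^K := by
    rw [zpow_sub_one₀ (two_ne_zero)]; field_simp
  have e1 : (2:ℝ)^(K-1)*(2*(m:ℝ)) = (2:ℝ)^K*(m:ℝ) := by
    linear_combination (m:ℝ) * hpow
  have e2 : (2:ℝ)^(K-1)*(2*(m:ℝ)+1) = (2:ℝ)^K*(m:ℝ) + (2:ℝ)^K/2 := by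
    linear_combination ((m:ℝ)+1/2) * hpow
  rw [dyadicI, Set.mem_Ico]
  push_cast
  rw [e1, e2]

/-- On the left half of `I(J) = I_{2k}`, the Haar multiplier
`S = r ∑_{i=0}^{2k} ⟨μ, h_{I_i}⟩ h_{I_i}` applied to `μ = μ_J^λ` has
absolute value exactly `(2k+1)λ/3`. -/
theorem stmt5 (k : ℕ) (hk : 1 ≤ k) (n p : ℤ) (lam r : ℝ) (hlam : 0 < lam)
    (hr : r = 1 ∨ r = -1)
    (c : Fin (2*k+1) → ℤ × ℤ)
    (h0 : c 0 = (n, p))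
    (hjp : ∀ i, jp n p ∈ dyadicI ((c i).1 - 1) (2 * (c i).2))
    (hnest : ∀ i : Fin (2*k),
      dyadicI (c i.succ).1 (c i.succ).2 ⊆ dyadicI (c i.castSucc).1 (c i.castSucc).2)
    (hlen : ∀ i : Fin (2*k),
      volume (dyadicI (c i.castSucc).1 (c i.castSucc).2)
        = 4 * volume (dyadicI (c i.succ).1 (c i.succ).2))
    (x : ℝ)
    (hx : x ∈ dyadicI ((c (Fin.last (2*k))).1 - 1) (2 * (c (Fin.last (2*k))).2)) :
    |r * ∑ i : Fin (2*k+1), haarCoeff n p lam (c i) * haarF (c i).1 (c i).2 x|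
      = (2 * (k:ℝ) + 1) * lam / 3 := by
  -- exponents
  have hK : ∀ i : Fin (2*k+1), (c i).1 = n - 2*((i:ℕ):ℤ) := by
    intro i
    induction i using Fin.induction with
    | zero => rw [h0]; simp
    | succ j ih =>
      have hv := hlen j
      rw [aux_vol, aux_vol,
        show (4 : ENNReal) * ENNReal.ofReal ((2:ℝ)^((c j.succ).1))
          = ENNReal.ofReal (4 * (2:ℝ)^((c j.succ).1)) by
            rw [ENNReal.ofReal_mul (by norm_num : (0:ℝ) ≤ 4)]; norm_num,
        ENNReal.ofReal_eq_ofReal_iff (zpow_pos (by norm_num) _).le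
          (by positivity)] at hv
      have hv2 : (2:ℝ)^((c j.castSucc).1) = (2:ℝ)^((c j.succ).1 + 2) := by
        rw [zpow_add₀ (two_ne_zero)]; rw [hv]; norm_num; ring
      have := zpow_right_injective₀ (show (0:ℝ) < 2 by norm_num)
        (by norm_num) hv2
      have hcast : ((j.castSucc : ℕ) : ℤ) = (j : ℕ) := by simp
      have hsucc : ((j.succ : ℕ) : ℤ) = (j : ℕ) + 1 := by simp
      rw [hcast] at ih
      rw [hsucc]
      omega
  -- jp - a = ℓ/3 for every level
  have hja : ∀ i : Fin (2*k+1),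
      jp n p - (2:ℝ)^((c i).1) * ((c i).2 : ℝ) = (2:ℝ)^((c i).1) / 3 := by
    intro i
    have hmem := hjp i
    rw [dyadicI, Set.mem_Ico] at hmem
    obtain ⟨h1, h2⟩ := hmem
    push_cast at h1 h2
    exact aux_jpa n p _ _ (i : ℕ) (hK i) (by linarith) (by linarith)
  -- x is in the left half of every interval in the chain
  have hxall : ∀ i : Fin (2*k+1), x ∈ dyadicI ((c i).1 - 1) (2 * (c i).2) := by
    intro i
    have hlast := (aux_mem_iff _ _ x).1 hx
    have hjl := hja (Fin.last (2*k))
    have hji := hja i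
    have hle : (2:ℝ)^((c (Fin.last (2*k))).1) ≤ (2:ℝ)^((c i).1) := by
      apply zpow_le_zpow_right₀ (by norm_num)
      rw [hK i, hK (Fin.last (2*k))]
      have : (i:ℕ) ≤ 2*k := Fin.is_le i
      simp only [Fin.val_last]
      omega
    rw [aux_mem_iff]
    constructor
    · -- 2^Ki * m_i ≤ x
      have := hlast.1
      nlinarith [zpow_pos (show (0:ℝ) < 2 by norm_num) ((c i).1)]
    · have := hlast.2
      nlinarith [zpow_pos (show (0:ℝ) < 2 by norm_num) ((c i).1)]
  -- each term equals -lam/3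
  have hterm : ∀ i : Fin (2*k+1),
      haarCoeff n p lam (c i) * haarF (c i).1 (c i).2 x = -(lam/3) := by
    intro i
    have hKn : (c i).1 ≤ n := by rw [hK i]; omega
    have hco : haarCoeff n p lam (c i) = lam * Real.sqrt ((2:ℝ)^((c i).1)) / 3 := by
      have := aux_coeff n p (c i).1 (c i).2 lam hKn (hja i)
      simpa using this
    rw [hco, aux_haarF_left _ _ _ (hxall i)]
    have hspos : 0 < Real.sqrt ((2:ℝ)^((c i).1)) :=
      Real.sqrt_pos.2 (zpow_pos (by norm_num) _)
    field_simp
  rw [Finset.sum_congr rfl (fun i _ => hterm i), Finset.sum_const,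
    Finset.card_univ, Fintype.card_fin]
  have hcast : ((2*k+1 : ℕ) : ℝ) = 2*(k:ℝ)+1 := by push_cast; ring
  rcases hr with hr | hr <;> subst hr
  · rw [one_mul, nsmul_eq_mul, hcast, abs_of_nonpos (by nlinarith)]
    ring
  · rw [nsmul_eq_mul, hcast]
    rw [show (-1 : ℝ) * ((2*(k:ℝ)+1) * -(lam/3)) = (2*(k:ℝ)+1)*lam/3 by ring]
    rw [abs_of_nonneg (by positivity)]
end

section
/- With notation as in the construction (k ≥ 1, J dyadic, μ = μ_J^λ, S = S_{J,r}), the level set {x : |S μ(x)| > k·μ(J)/|J|} equals exactly the left half of I(J), and consequently μ({x : |S μ(x)| > k μ(J)/|J|}) = (1/4)·2^{-4k}·μ(J). -/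
open MeasureTheory Set

/-- The measure `μ_J^λ = λ·1_{[jp(J), rep(J))} dx` applied to a set `A`. -/
noncomputable def muMeas (n p : ℤ) (lam : ℝ) (A : Set ℝ) : ℝ :=
  lam * (volume (A ∩ Set.Ico (jp n p) (rep n p))).toReal

/-! ### Auxiliary machinery -/

/-- The indices of the chain intervals. -/
def qseq (p : ℤ) : ℕ → ℤ
  | 0 => p
  | i+1 => 4 * qseq p i + 1

lemma qseq_id (p : ℤ) (i : ℕ) : 3 * qseq p i + 1 = 4^i * (3*p+1) := by
  induction i with
  | zero => simp [qseq]
  | succ i ih => rw [qseq, pow_succ]; linarith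

/-- The length of the `i`-th chain interval. -/
noncomputable def tI (n : ℤ) (i : ℕ) : ℝ := (2:ℝ)^(n - 2*(i:ℤ))

lemma tI_pos (n : ℤ) (i : ℕ) : 0 < tI n i := by unfold tI; positivity

lemma tI_mono (n : ℤ) {i j : ℕ} (h : i ≤ j) : tI n j ≤ tI n i :=
  zpow_le_zpow_right₀ one_le_two (by omega)

lemma tI_le (n : ℤ) (i : ℕ) : tI n i ≤ (2:ℝ)^n := by
  have := tI_mono n (Nat.zero_le i)
  simp only [tI, Nat.cast_zero, mul_zero, sub_zero] at this
  exact this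

lemma two_pow_split (n : ℤ) (i : ℕ) : (2:ℝ)^n = (2:ℝ)^(n-2*(i:ℤ)) * 4^i := by
  have h4 : ((4:ℝ))^i = (2:ℝ)^((2*(i:ℕ) : ℕ) : ℤ) := by
    rw [zpow_natCast, pow_mul]; norm_num
  rw [h4, ← zpow_add₀ (by norm_num : (2:ℝ) ≠ 0)]
  congr 1; push_cast; ring

lemma jp_eq (n p : ℤ) (i : ℕ) :
    (2:ℝ)^(n-2*(i:ℤ)) * (qseq p i) + (2:ℝ)^(n-2*(i:ℤ))/3 = jp n p := by
  have h := qseq_id p i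
  have hc : (3:ℝ) * (qseq p i : ℝ) + 1 = 4^i * (3*(p:ℝ)+1) :=
    by exact_mod_cast congrArg (Int.cast : ℤ → ℝ) h
  have hs := two_pow_split n i
  have ht : (0:ℝ) < (2:ℝ)^(n-2*(i:ℤ)) := by positivity
  rw [jp]
  field_simp
  linear_combination ((2:ℝ)^(n-2*(i:ℤ))) * hc - (3*(p:ℝ)+1) * hs

lemma rep_eq (n p : ℤ) : rep n p = jp n p + (2:ℝ)^n * 2/3 := by
  rw [jp, rep]; ring

lemma pow_half (a : ℤ) : (2:ℝ)^(a-1) = (2:ℝ)^a / 2 := by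
  rw [zpow_sub_one₀ (by norm_num : (2:ℝ) ≠ 0)]; ring

lemma left_half_eq (n p a q : ℤ) (h : (2:ℝ)^a * q + (2:ℝ)^a/3 = jp n p) :
    dyadicI (a-1) (2*q) = Ico (jp n p - (2:ℝ)^a/3) (jp n p + (2:ℝ)^a/6) := by
  unfold dyadicI
  rw [pow_half]
  have e1 : (2:ℝ)^a/2 * ((2*q : ℤ) : ℝ) = jp n p - (2:ℝ)^a/3 := by
    push_cast; linear_combination h
  have e2 : (2:ℝ)^a/2 * (((2*q : ℤ) : ℝ)+1) = jp n p + (2:ℝ)^a/6 := by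
    push_cast; linear_combination h
  rw [e1, e2]

lemma right_half_eq (n p a q : ℤ) (h : (2:ℝ)^a * q + (2:ℝ)^a/3 = jp n p) :
    dyadicI (a-1) (2*q+1) = Ico (jp n p + (2:ℝ)^a/6) (jp n p + (2:ℝ)^a*2/3) := by
  unfold dyadicI
  rw [pow_half]
  have e1 : (2:ℝ)^a/2 * (((2*q+1 : ℤ)) : ℝ) = jp n p + (2:ℝ)^a/6 := by
    push_cast; linear_combination h
  have e2 : (2:ℝ)^a/2 * ((((2*q+1 : ℤ)) : ℝ)+1) = jp n p + (2:ℝ)^a*2/3 := by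
    push_cast; linear_combination h
  rw [e1, e2]

lemma dyadic_vol (a b : ℤ) : volume (dyadicI a b) = ENNReal.ofReal ((2:ℝ)^a) := by
  rw [dyadicI, Real.volume_Ico]; ring_nf

lemma ind_integral (c : ℝ) (A B : ℝ) (T : Set ℝ) :
    ∫ x in T, (Ico A B).indicator (fun _ => c) x = (volume (Ico A B ∩ T)).toReal * c := by
  rw [integral_indicator_const _ measurableSet_Ico, measureReal_def, Measure.restrict_apply measurableSet_Ico]
  simp [mul_comm]

lemma coeff_eval (n p : ℤ) (lam : ℝ) (a q : ℤ)
    (h : (2:ℝ)^a * q + (2:ℝ)^a/3 = jp n p) (hub : (2:ℝ)^a*(q+1) ≤ rep n p) :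
    haarCoeff n p lam (a, q) = lam * Real.sqrt ((2:ℝ)^a) / 3 := by
  have ht : (0:ℝ) < (2:ℝ)^a := by positivity
  set t := (2:ℝ)^a with htdef
  have hsq : Real.sqrt t * Real.sqrt t = t := Real.mul_self_sqrt ht.le
  have hsq0 : Real.sqrt t ≠ 0 := by positivity
  have hR : dyadicI (a-1) (2*q+1) = Ico (jp n p + t/6) (jp n p + t*2/3) :=
    right_half_eq n p a q h
  have hL : dyadicI (a-1) (2*q) = Ico (jp n p - t/3) (jp n p + t/6) :=
    left_half_eq n p a q h
  have hub' : jp n p + t*2/3 ≤ rep n p := by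
    calc jp n p + t*2/3 = t*(q+1) := by linear_combination -h
    _ ≤ rep n p := hub
  have key : ∀ x : ℝ, lam * haarF a q x =
      (Ico (jp n p + t/6) (jp n p + t*2/3)).indicator (fun _ => lam / Real.sqrt t) x
      - (Ico (jp n p - t/3) (jp n p + t/6)).indicator (fun _ => lam / Real.sqrt t) x := by
    intro x
    rw [haarF, hR, hL, ← htdef]
    by_cases h1 : x ∈ Ico (jp n p + t/6) (jp n p + t*2/3) <;>
      by_cases h2 : x ∈ Ico (jp n p - t/3) (jp n p + t/6) <;>
      simp [h1, h2] <;> field_simp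
  have hint : ∀ (A B : ℝ), IntegrableOn
      ((Ico A B).indicator (fun _ => lam / Real.sqrt t)) (Ico (jp n p) (rep n p)) volume := by
    intro A B
    apply Integrable.indicator _ measurableSet_Ico
    exact integrableOn_const (by rw [Real.volume_Ico]; exact ENNReal.ofReal_ne_top)
  rw [haarCoeff]
  simp only [key]
  rw [integral_sub (hint _ _) (hint _ _), ind_integral, ind_integral]
  have e1 : Ico (jp n p + t/6) (jp n p + t*2/3) ∩ Ico (jp n p) (rep n p)
      = Ico (jp n p + t/6) (jp n p + t*2/3) := by
    rw [Ico_inter_Ico, max_eq_left (by linarith), min_eq_left hub']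
  have e2 : Ico (jp n p - t/3) (jp n p + t/6) ∩ Ico (jp n p) (rep n p)
      = Ico (jp n p) (jp n p + t/6) := by
    rw [Ico_inter_Ico, max_eq_right (by linarith), min_eq_left (by linarith)]
  rw [e1, e2, Real.volume_Ico, Real.volume_Ico,
    ENNReal.toReal_ofReal (by linarith), ENNReal.toReal_ofReal (by linarith)]
  field_simp
  ring_nf
  linear_combination (-(lam * 6)) * hsq

/-- The summand of `Sμ` in simplified form. -/
noncomputable def gI (n p : ℤ) (i : ℕ) (x : ℝ) : ℝ :=
  (Ico (jp n p + tI n i/6) (jp n p + tI n i*2/3)).indicator (fun _ => (1:ℝ)) x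
  - (Ico (jp n p - tI n i/3) (jp n p + tI n i/6)).indicator (fun _ => (1:ℝ)) x

lemma gI_abs_le (n p : ℤ) (i : ℕ) (x : ℝ) : |gI n p i x| ≤ 1 := by
  unfold gI
  by_cases h1 : x ∈ Ico (jp n p + tI n i/6) (jp n p + tI n i*2/3) <;>
    by_cases h2 : x ∈ Ico (jp n p - tI n i/3) (jp n p + tI n i/6) <;>
    simp [h1, h2]

lemma gI_of_left (n p : ℤ) (i : ℕ) (x : ℝ)
    (h : x ∈ Ico (jp n p - tI n i/3) (jp n p + tI n i/6)) : gI n p i x = -1 := by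
  have h1 : x ∉ Ico (jp n p + tI n i/6) (jp n p + tI n i*2/3) := by
    intro hx
    exact absurd h.2 (not_lt.2 hx.1)
  unfold gI
  simp [h1, h]

lemma hub_all (n p : ℤ) (i : ℕ) :
    (2:ℝ)^(n-2*(i:ℤ)) * ((qseq p i : ℝ)+1) ≤ rep n p := by
  have h := jp_eq n p i
  have h2 := tI_le n i
  rw [rep_eq]
  unfold tI at h2
  linarith

lemma term_eval (n p : ℤ) (lam : ℝ) (i : ℕ) (x : ℝ) :
    haarCoeff n p lam (n - 2*(i:ℤ), qseq p i) * haarF (n - 2*(i:ℤ)) (qseq p i) x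
      = lam/3 * gI n p i x := by
  rw [coeff_eval n p lam _ _ (jp_eq n p i) (hub_all n p i)]
  rw [haarF, right_half_eq n p _ _ (jp_eq n p i), left_half_eq n p _ _ (jp_eq n p i)]
  have hs0 : Real.sqrt ((2:ℝ)^(n-2*(i:ℤ))) ≠ 0 := by positivity
  unfold gI tI
  field_simp

/-- The level set `{x : |S_{J,r} μ_J^λ (x)| > k μ_J^λ(J)/|J|}` is exactly the left half
of `I(J) = I_{2k}`, and its `μ_J^λ` measure equals `(1/4)·2^{-4k}·μ_J^λ(J)`. -/
theorem stmt6 (k : ℕ) (hk : 1 ≤ k) (n p : ℤ) (lam r : ℝ) (hlam : 0 < lam)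
    (hr : r = 1 ∨ r = -1)
    (c : Fin (2*k+1) → ℤ × ℤ)
    (h0 : c 0 = (n, p))
    (hjp : ∀ i, jp n p ∈ dyadicI ((c i).1 - 1) (2 * (c i).2))
    (hnest : ∀ i : Fin (2*k),
      dyadicI (c i.succ).1 (c i.succ).2 ⊆ dyadicI (c i.castSucc).1 (c i.castSucc).2)
    (hlen : ∀ i : Fin (2*k),
      volume (dyadicI (c i.castSucc).1 (c i.castSucc).2)
        = 4 * volume (dyadicI (c i.succ).1 (c i.succ).2)) :
    {x : ℝ | (k : ℝ) * (muMeas n p lam (dyadicI n p) / (volume (dyadicI n p)).toReal)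
        < |r * ∑ i : Fin (2*k+1), haarCoeff n p lam (c i) * haarF (c i).1 (c i).2 x|}
      = dyadicI ((c (Fin.last (2*k))).1 - 1) (2 * (c (Fin.last (2*k))).2) ∧
    muMeas n p lam
        {x : ℝ | (k : ℝ) * (muMeas n p lam (dyadicI n p) / (volume (dyadicI n p)).toReal)
          < |r * ∑ i : Fin (2*k+1), haarCoeff n p lam (c i) * haarF (c i).1 (c i).2 x|}
      = (1/4) * ((2:ℝ)^(4*k))⁻¹ * muMeas n p lam (dyadicI n p) := by
  have h20 : (2:ℝ) ≠ 0 := by norm_num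
  -- Step 1: identify the chain
  have key : ∀ m : ℕ, ∀ hm : m < 2*k+1, c ⟨m, hm⟩ = (n - 2*(m:ℤ), qseq p m) := by
    intro m
    induction m with
    | zero =>
      intro hm
      have e0 : (⟨0, hm⟩ : Fin (2*k+1)) = 0 := by ext; simp
      rw [e0, h0]
      simp [qseq]
    | succ j ih =>
      intro hm
      have hj2 : j < 2*k := by omega
      have hcs : c (Fin.castSucc (⟨j, hj2⟩ : Fin (2*k))) = (n - 2*(j:ℤ), qseq p j) :=
        ih (by omega)
      obtain ⟨A, M, hAM⟩ : ∃ A M, c (Fin.succ (⟨j, hj2⟩ : Fin (2*k))) = (A, M) :=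
        ⟨_, _, rfl⟩
      have hv := hlen ⟨j, hj2⟩
      rw [hcs, hAM] at hv
      rw [dyadic_vol, dyadic_vol] at hv
      have h4 : (4:ENNReal) * ENNReal.ofReal ((2:ℝ)^A) = ENNReal.ofReal (4 * (2:ℝ)^A) := by
        rw [ENNReal.ofReal_mul (by norm_num : (0:ℝ) ≤ 4)]
        norm_num
      rw [h4] at hv
      have hreq : (2:ℝ)^(n-2*(j:ℤ)) = 4 * (2:ℝ)^A :=
        (ENNReal.ofReal_eq_ofReal_iff (by positivity) (by positivity)).1 hv
      have h2' : (2:ℝ)^(n-2*(j:ℤ)) = (2:ℝ)^(A+2) := by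
        rw [zpow_add₀ h20, hreq]
        norm_num
        ring
      have hAeq' : n - 2*(j:ℤ) = A + 2 :=
        zpow_right_injective₀ (by norm_num) (by norm_num) h2'
      have hAeq : A = n - 2*(((j+1:ℕ)):ℤ) := by push_cast; omega
      -- identify the index
      have hmem := hjp (Fin.succ (⟨j, hj2⟩ : Fin (2*k)))
      rw [hAM] at hmem
      rw [dyadicI, mem_Ico] at hmem
      obtain ⟨hm1, hm2⟩ := hmem
      rw [pow_half, hAeq] at hm1 hm2
      have hQ := jp_eq n p (j+1)
      push_cast at hm1 hm2 hQ
      have ht : (0:ℝ) < (2:ℝ)^(n - 2*((j:ℤ)+1)) := by positivity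
      have l1 : (M:ℝ) ≤ (qseq p (j+1) : ℝ) + 1/3 := by
        refine le_of_mul_le_mul_left ?_ ht
        linarith
      have l2 : (qseq p (j+1) : ℝ) + 1/3 < (M:ℝ) + 1/2 := by
        refine (mul_lt_mul_iff_right₀ ht).1 ?_
        linarith
      have hMQ : M = qseq p (j+1) := by
        have d1 : M < qseq p (j+1) + 1 := by
          have hc1 : (M:ℝ) < (qseq p (j+1) : ℝ) + 1 := by linarith
          exact_mod_cast hc1
        have d2 : qseq p (j+1) < M + 1 := by
          have : (qseq p (j+1) : ℝ) < (M:ℝ) + 1 := by linarith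
          exact_mod_cast this
        omega
      have hfin : (⟨j+1, hm⟩ : Fin (2*k+1)) = Fin.succ (⟨j, hj2⟩ : Fin (2*k)) := rfl
      rw [hfin, hAM, Prod.mk.injEq]
      exact ⟨hAeq, hMQ⟩
  have keyF : ∀ i : Fin (2*k+1), c i = (n - 2*((i:ℕ):ℤ), qseq p i) :=
    fun i => key i.1 i.2
  -- Step 2: the threshold
  have hmuJ : muMeas n p lam (dyadicI n p) = lam * ((2:ℝ)^n * 2/3) := by
    rw [muMeas]
    have hsub : Ico (jp n p) (rep n p) ⊆ dyadicI n p := by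
      rw [dyadicI, jp, rep]
      apply Ico_subset_Ico _ le_rfl
      have h2n : (0:ℝ) < (2:ℝ)^n := by positivity
      linarith
    have hd : rep n p - jp n p = (2:ℝ)^n * 2/3 := by rw [rep_eq]; ring
    rw [inter_eq_self_of_subset_right hsub, Real.volume_Ico, hd,
      ENNReal.toReal_ofReal (by positivity)]
  have hvolJ : (volume (dyadicI n p)).toReal = (2:ℝ)^n := by
    rw [dyadic_vol, ENNReal.toReal_ofReal (by positivity)]
  have h2n0 : ((2:ℝ)^n) ≠ 0 := by positivity
  have hthr : (k:ℝ) * (muMeas n p lam (dyadicI n p) / (volume (dyadicI n p)).toReal)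
      = lam/3 * (2*(k:ℝ)) := by
    rw [hmuJ, hvolJ]
    field_simp
  -- Step 3: sum rewrite
  have hS : ∀ x : ℝ, (∑ i : Fin (2*k+1), haarCoeff n p lam (c i) * haarF (c i).1 (c i).2 x)
      = lam/3 * ∑ i : Fin (2*k+1), gI n p (↑i) x := by
    intro x
    rw [Finset.mul_sum]
    refine Finset.sum_congr rfl fun i _ => ?_
    rw [keyF i]
    exact term_eval n p lam i x
  have habs : ∀ x : ℝ,
      |r * ∑ i : Fin (2*k+1), haarCoeff n p lam (c i) * haarF (c i).1 (c i).2 x|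
      = lam/3 * |∑ i : Fin (2*k+1), gI n p (↑i) x| := by
    intro x
    rw [hS, abs_mul, abs_mul]
    have hr1 : |r| = 1 := by rcases hr with h|h <;> simp [h]
    rw [hr1, abs_of_pos (by positivity : (0:ℝ) < lam/3)]
    ring
  have hcond : ∀ x : ℝ,
      ((k : ℝ) * (muMeas n p lam (dyadicI n p) / (volume (dyadicI n p)).toReal)
        < |r * ∑ i : Fin (2*k+1), haarCoeff n p lam (c i) * haarF (c i).1 (c i).2 x|)
      ↔ 2*(k:ℝ) < |∑ i : Fin (2*k+1), gI n p (↑i) x| := by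
    intro x
    rw [hthr, habs x]
    exact mul_lt_mul_iff_right₀ (by positivity)
  -- Step 4: the target set
  have htarget : dyadicI ((c (Fin.last (2*k))).1 - 1) (2 * (c (Fin.last (2*k))).2)
      = Ico (jp n p - tI n (2*k)/3) (jp n p + tI n (2*k)/6) := by
    rw [keyF (Fin.last (2*k))]
    simp only [Fin.val_last]
    exact left_half_eq n p _ _ (jp_eq n p (2*k))
  -- Step 5: pointwise characterization
  have hiff : ∀ x : ℝ, (2*(k:ℝ) < |∑ i : Fin (2*k+1), gI n p (↑i) x|)
      ↔ x ∈ Ico (jp n p - tI n (2*k)/3) (jp n p + tI n (2*k)/6) := by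
    intro x
    constructor
    · intro hgt
      by_contra hxL
      have hbound : |∑ i : Fin (2*k+1), gI n p (↑i) x| ≤ 2*(k:ℝ) := by
        by_cases hxR : x ∈ Ico (jp n p + tI n (2*k)/6) (jp n p + tI n (2*k)*2/3)
        · -- g at last index is 1, g at 0 is -1
          have h4T : 4 * tI n (2*k) ≤ tI n 0 := by
            have e : 4 * tI n (2*k) = (2:ℝ)^(n - 2*((2*k:ℕ):ℤ) + 2) := by
              rw [zpow_add₀ h20]
              unfold tI
              ring_nf
            rw [e]
            unfold tI
            apply zpow_le_zpow_right₀ one_le_two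
            push_cast
            omega
          have hT0 := tI_pos n 0
          have hTl := tI_pos n (2*k)
          have hg0 : gI n p ((0 : Fin (2*k+1)) : ℕ) x = -1 := by
            have h0v : ((0 : Fin (2*k+1)) : ℕ) = 0 := rfl
            rw [h0v]
            apply gI_of_left
            constructor
            · have := hxR.1; linarith
            · have := hxR.2; linarith
          have hgl : gI n p ((Fin.last (2*k) : Fin (2*k+1)) : ℕ) x = 1 := by
            rw [Fin.val_last]
            unfold gI
            simp [hxR, hxL]
          have h0ne : (0 : Fin (2*k+1)) ≠ Fin.last (2*k) := by
            rw [Fin.ne_iff_vne, Fin.val_last]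
            simp
            omega
          have hlmem : Fin.last (2*k) ∈ (Finset.univ.erase (0 : Fin (2*k+1))) :=
            Finset.mem_erase.2 ⟨h0ne.symm, Finset.mem_univ _⟩
          rw [← Finset.add_sum_erase _ _ (Finset.mem_univ (0 : Fin (2*k+1))),
            ← Finset.add_sum_erase _ _ hlmem, hg0, hgl]
          have hcard : (((Finset.univ.erase (0 : Fin (2*k+1))).erase
              (Fin.last (2*k)))).card = 2*k - 1 := by
            rw [Finset.card_erase_of_mem hlmem,
              Finset.card_erase_of_mem (Finset.mem_univ _), Finset.card_univ,
              Fintype.card_fin]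
            omega
          have hrest : |∑ i ∈ ((Finset.univ.erase (0 : Fin (2*k+1))).erase
              (Fin.last (2*k))), gI n p (↑i) x| ≤ 2*(k:ℝ) - 1 := by
            refine (Finset.abs_sum_le_sum_abs _ _).trans ?_
            have := Finset.sum_le_card_nsmul
              ((Finset.univ.erase (0 : Fin (2*k+1))).erase (Fin.last (2*k)))
              (fun i => |gI n p (↑i) x|) 1 (fun i _ => gI_abs_le n p (↑i) x)
            rw [hcard] at this
            calc _ ≤ (2*k-1 : ℕ) • (1:ℝ) := this
            _ = ((2*k-1 : ℕ) : ℝ) := by simp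
            _ = 2*(k:ℝ) - 1 := by
                rw [Nat.cast_sub (by omega)]
                push_cast
                ring
          calc |(-1) + (1 + ∑ i ∈ ((Finset.univ.erase (0 : Fin (2*k+1))).erase
              (Fin.last (2*k))), gI n p (↑i) x)|
              = |∑ i ∈ ((Finset.univ.erase (0 : Fin (2*k+1))).erase
                (Fin.last (2*k))), gI n p (↑i) x| := by ring_nf
            _ ≤ 2*(k:ℝ) - 1 := hrest
            _ ≤ 2*(k:ℝ) := by linarith
        · -- g at last index is 0
          have hgl : gI n p ((Fin.last (2*k) : Fin (2*k+1)) : ℕ) x = 0 := by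
            rw [Fin.val_last]
            unfold gI
            simp [hxR, hxL]
          rw [← Finset.add_sum_erase _ _ (Finset.mem_univ (Fin.last (2*k))), hgl]
          have hcard : ((Finset.univ.erase (Fin.last (2*k))) : Finset (Fin (2*k+1))).card
              = 2*k := by
            rw [Finset.card_erase_of_mem (Finset.mem_univ _), Finset.card_univ,
              Fintype.card_fin]
            omega
          calc |0 + ∑ i ∈ Finset.univ.erase (Fin.last (2*k)), gI n p (↑i) x|
              = |∑ i ∈ Finset.univ.erase (Fin.last (2*k)), gI n p (↑i) x| := by ring_nf
            _ ≤ ∑ i ∈ Finset.univ.erase (Fin.last (2*k)), |gI n p (↑i) x| :=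
                Finset.abs_sum_le_sum_abs _ _
            _ ≤ ((Finset.univ.erase (Fin.last (2*k))) : Finset (Fin (2*k+1))).card • (1:ℝ) :=
                Finset.sum_le_card_nsmul _ _ 1 (fun i _ => gI_abs_le n p (↑i) x)
            _ = 2*(k:ℝ) := by rw [hcard]; push_cast; simp
      linarith
    · intro hxL
      have hall : ∀ i : Fin (2*k+1), gI n p (↑i) x = -1 := by
        intro i
        apply gI_of_left
        have hmono := tI_mono n (show (↑i:ℕ) ≤ 2*k from by omega)
        obtain ⟨hx1, hx2⟩ := hxL
        constructor
        · linarith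
        · linarith
      have hsum : (∑ i : Fin (2*k+1), gI n p (↑i) x) = -(2*(k:ℝ)+1) := by
        rw [Finset.sum_congr rfl (fun i _ => hall i), Finset.sum_const,
          Finset.card_univ, Fintype.card_fin]
        push_cast
        ring
      rw [hsum, abs_neg, abs_of_pos (by positivity)]
      linarith
  -- Conclusion
  have hpart1 : {x : ℝ | (k : ℝ) * (muMeas n p lam (dyadicI n p)
        / (volume (dyadicI n p)).toReal)
      < |r * ∑ i : Fin (2*k+1), haarCoeff n p lam (c i) * haarF (c i).1 (c i).2 x|}
      = dyadicI ((c (Fin.last (2*k))).1 - 1) (2 * (c (Fin.last (2*k))).2) := by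
    ext x
    rw [mem_setOf_eq, htarget]
    exact (hcond x).trans (hiff x)
  refine ⟨hpart1, ?_⟩
  rw [hpart1, htarget, muMeas]
  have hTpos := tI_pos n (2*k)
  have hcap : Ico (jp n p - tI n (2*k)/3) (jp n p + tI n (2*k)/6)
      ∩ Ico (jp n p) (rep n p) = Ico (jp n p) (jp n p + tI n (2*k)/6) := by
    rw [Ico_inter_Ico, max_eq_right (by linarith), min_eq_left ?_]
    rw [rep_eq]
    have := tI_le n (2*k)
    linarith
  have hd : jp n p + tI n (2*k)/6 - jp n p = tI n (2*k)/6 := by ring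
  rw [hcap, Real.volume_Ico, hd, ENNReal.toReal_ofReal (by positivity), hmuJ]
  have hT : tI n (2*k) = (2:ℝ)^n / (2:ℝ)^(4*k : ℕ) := by
    unfold tI
    rw [zpow_sub₀ h20]
    congr 1
    rw [← zpow_natCast (2:ℝ) (4*k)]
    congr 1
    push_cast
    ring
  rw [hT]
  have h4k0 : ((2:ℝ)^(4*k:ℕ)) ≠ 0 := by positivity
  field_simp
  ring
end
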